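/- Let G = (V,E) be a finite simple graph with n = |V| and let G' be constructed from G as follows: add three sets K_1, K_2, K_3, each consisting of n³ new vertices v_{1,i}, …, v_{n³,i} for i ∈ {1,2,3}; add all edges inside each K_i, all edges between every vertex of K_1 ∪ K_2 ∪ K_3 and every vertex of V, and all edges {v_{c,i}, v_{d,j}} with i ≠ j and c ≠ d. Then V can be partitioned into at most three cliques of G if and only if G' admits an STC-labeling with at least 3·C(n³,2) + n⁴ strong edges, where C(n³,2) = n³(n³−1)/2. -/

import Mathlib

/-- An STC-labeling of a simple graph `G`, given by its set `S` of strong edges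
(the weak edges are `G.edgeSet \ S`). -/
def IsSTCLabeling {V : Type*} (G : SimpleGraph V) (S : Set (Sym2 V)) : Prop :=
  S ⊆ G.edgeSet ∧ ∀ u v w : V, s(u, v) ∈ S → s(v, w) ∈ S → u ≠ w → G.Adj u w

/-- The graph `G'` of the 3-clique-cover reduction: to `G` we add three cliques
`K_1, K_2, K_3`, each on `N` new vertices `v_{c,i} = (i, c)`; every new vertex is
adjacent to every vertex of `V`, and two new vertices `(i, c)` and `(j, d)` are
adjacent iff `c ≠ d` (this realizes all edges inside each `K_i` and the edges
`{v_{c,i}, v_{d,j}}` with `i ≠ j` and `c ≠ d`). -/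
def tccGraph {V : Type*} (G : SimpleGraph V) (N : ℕ) :
    SimpleGraph (V ⊕ (Fin 3 × Fin N)) :=
  SimpleGraph.fromRel (fun a b =>
    match a, b with
    | Sum.inl u, Sum.inl v => G.Adj u v
    | Sum.inl _, Sum.inr _ => True
    | Sum.inr _, Sum.inl _ => True
    | Sum.inr p, Sum.inr q => p.2 ≠ q.2)

lemma tcc_adj_ll {V : Type*} (G : SimpleGraph V) (N : ℕ) (u v : V) :
    (tccGraph G N).Adj (Sum.inl u) (Sum.inl v) ↔ G.Adj u v := by
  rw [tccGraph, SimpleGraph.fromRel_adj]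
  constructor
  · rintro ⟨h1, h2 | h2⟩; exact h2; exact h2.symm
  · intro h; exact ⟨by rintro ⟨⟩; exact G.irrefl h, Or.inl h⟩

lemma tcc_adj_lr {V : Type*} (G : SimpleGraph V) (N : ℕ) (u : V) (p : Fin 3 × Fin N) :
    (tccGraph G N).Adj (Sum.inl u) (Sum.inr p) := by
  rw [tccGraph, SimpleGraph.fromRel_adj]
  exact ⟨by rintro ⟨⟩, Or.inl trivial⟩

lemma tcc_adj_rr {V : Type*} (G : SimpleGraph V) (N : ℕ) (p q : Fin 3 × Fin N) :
    (tccGraph G N).Adj (Sum.inr p) (Sum.inr q) ↔ p.2 ≠ q.2 := by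
  rw [tccGraph, SimpleGraph.fromRel_adj]
  constructor
  · rintro ⟨h1, h2 | h2⟩; exact h2; exact h2.symm
  · intro h
    exact ⟨by rintro h'; exact h (congrArg (fun x => Sum.elim (fun _ => p.2) Prod.snd x) h'), Or.inl h⟩

lemma sym2_exists {α : Type*} (e : Sym2 α) : ∃ x y, e = s(x, y) :=
  Sym2.ind (fun x y => ⟨x, y, rfl⟩) e

open Sum in
lemma tcc_forward {V : Type*} [Fintype V] (G : SimpleGraph V)
    (V1 V2 V3 : Set V) (hU : V1 ∪ V2 ∪ V3 = Set.univ)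
    (hC1 : G.IsClique V1) (hC2 : G.IsClique V2) (hC3 : G.IsClique V3) :
    (∃ S : Set (Sym2 (V ⊕ (Fin 3 × Fin ((Fintype.card V) ^ 3)))),
      IsSTCLabeling (tccGraph G ((Fintype.card V) ^ 3)) S ∧
      3 * ((Fintype.card V) ^ 3).choose 2 + (Fintype.card V) ^ 4 ≤ S.ncard) := by
  classical
  set n := Fintype.card V with hn
  set N := n ^ 3 with hN
  set f : V → Fin 3 := fun u => if u ∈ V1 then 0 else if u ∈ V2 then 1 else 2 with hf
  have hmem : ∀ u : V, (f u = 0 ∧ u ∈ V1) ∨ (f u = 1 ∧ u ∈ V2) ∨ (f u = 2 ∧ u ∈ V3) := by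
    intro u
    by_cases h1 : u ∈ V1
    · exact Or.inl ⟨by simp [hf, h1], h1⟩
    by_cases h2 : u ∈ V2
    · exact Or.inr (Or.inl ⟨by simp [hf, h1, h2], h2⟩)
    have h3 : u ∈ V3 := by
      have := hU ▸ Set.mem_univ u
      rcases this with (h | h) | h <;> tauto
    exact Or.inr (Or.inr ⟨by simp [hf, h1, h2], h3⟩)
  have hclq : ∀ u u', f u = f u' → u ≠ u' → G.Adj u u' := by
    intro u u' hfe hne
    rcases hmem u with ⟨e1, m1⟩ | ⟨e1, m1⟩ | ⟨e1, m1⟩ <;>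
      rcases hmem u' with ⟨e2, m2⟩ | ⟨e2, m2⟩ | ⟨e2, m2⟩ <;>
        rw [e1, e2] at hfe <;> first
          | exact hC1 m1 m2 hne
          | exact hC2 m1 m2 hne
          | exact hC3 m1 m2 hne
          | exact absurd hfe (by decide)
  set S : Set (Sym2 (V ⊕ (Fin 3 × Fin N))) :=
    {e | ∃ (i : Fin 3) (c d : Fin N), c ≠ d ∧ e = s(inr (i,c), inr (i,d))} ∪
    {e | ∃ (u : V) (c : Fin N), e = s(inl u, inr (f u, c))} with hS
  have memS : ∀ a b : V ⊕ (Fin 3 × Fin N), s(a, b) ∈ S →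
      (∃ i c d, c ≠ d ∧ a = inr (i,c) ∧ b = inr (i,d)) ∨
      (∃ u c, a = inl u ∧ b = inr (f u, c)) ∨
      (∃ u c, b = inl u ∧ a = inr (f u, c)) := by
    intro a b hab
    rcases hab with ⟨i, c, d, hcd, he⟩ | ⟨u, c, he⟩
    · rw [Sym2.eq_iff] at he
      rcases he with ⟨rfl, rfl⟩ | ⟨rfl, rfl⟩
      · exact Or.inl ⟨i, c, d, hcd, rfl, rfl⟩
      · exact Or.inl ⟨i, d, c, hcd.symm, rfl, rfl⟩
    · rw [Sym2.eq_iff] at he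
      rcases he with ⟨rfl, rfl⟩ | ⟨rfl, rfl⟩
      · exact Or.inr (Or.inl ⟨u, c, rfl, rfl⟩)
      · exact Or.inr (Or.inr ⟨u, c, rfl, rfl⟩)
  refine ⟨S, ⟨?_, ?_⟩, ?_⟩
  · -- subset of edges
    rintro e he
    obtain ⟨a, b, rfl⟩ := sym2_exists e
    rw [SimpleGraph.mem_edgeSet]
    rcases memS a b he with ⟨i, c, d, hcd, rfl, rfl⟩ | ⟨u, c, rfl, rfl⟩ | ⟨u, c, rfl, rfl⟩
    · rw [tcc_adj_rr]; exact hcd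
    · exact tcc_adj_lr G N u _
    · exact ((tcc_adj_lr G N u _)).symm
  · -- STC condition
    intro x v w h1 h2 hxw
    rcases memS x v h1 with ⟨i, c, d, hcd, rfl, hv⟩ | ⟨u, c, rfl, hv⟩ | ⟨u, c, hv, rfl⟩ <;>
      rcases memS v w h2 with ⟨i', c', d', hcd', hv', rfl⟩ | ⟨u', c', hv', rfl⟩ | ⟨u', c', rfl, hv'⟩
    · -- x=(i,c), v=(i,d)=(i',c'), w=(i',d')
      subst hv
      obtain ⟨rfl, rfl⟩ : i' = i ∧ c' = d := by
        simp only [Sum.inr.injEq, Prod.mk.injEq] at hv'; tauto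
      rw [tcc_adj_rr]
      intro hc
      exact hxw (congrArg (fun x => (inr (i', x) : V ⊕ Fin 3 × Fin N)) hc)
    · subst hv; simp at hv'
    · subst hv
      exact (tcc_adj_lr G N u' _).symm
    · subst hv
      exact tcc_adj_lr G N u _
    · subst hv; simp at hv'
    · -- x = inl u, v = inr (f u, c) = inr (f u', c'), w = inl u'
      subst hv
      obtain ⟨hff, rfl⟩ : f u' = f u ∧ c' = c := by
        simp only [Sum.inr.injEq, Prod.mk.injEq] at hv'; tauto
      rw [tcc_adj_ll]
      exact hclq u u' hff.symm (by rintro rfl; exact hxw rfl)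
    · rw [hv] at hv'; simp at hv'
    · -- v = inl u, x = inr (f u,c), w = inr (f u', c'), v = inl u' so u = u'
      obtain rfl : u' = u := by rw [hv] at hv'; simpa using hv'.symm
      rw [tcc_adj_rr]
      intro hc
      exact hxw (by simp [Prod.ext_iff] at hc ⊢; exact hc)
    · rw [hv] at hv'; simp at hv'
  · -- cardinality
    set F : ((Fin 3) × {e : Sym2 (Fin N) // ¬ e.IsDiag}) ⊕ (V × Fin N) → Sym2 (V ⊕ (Fin 3 × Fin N)) := fun a =>
      match a with
      | Sum.inl (i, e) => Sym2.map (fun c => Sum.inr (i, c)) e.val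
      | Sum.inr (u, c) => s(Sum.inl u, Sum.inr (f u, c)) with hF
    have hFinj : Function.Injective F := by
      rintro (⟨i, e⟩ | ⟨u, c⟩) (⟨i', e'⟩ | ⟨u', c'⟩) h
      · obtain ⟨a, b, hab⟩ := sym2_exists e.val
        obtain ⟨a', b', hab'⟩ := sym2_exists e'.val
        simp only [hF, hab, hab', Sym2.map_pair_eq, Sym2.eq_iff, Sum.inr.injEq,
          Prod.mk.injEq] at h
        have : i = i' ∧ e.val = e'.val := by
          rcases h with ⟨⟨hi, ha⟩, ⟨_, hb⟩⟩ | ⟨⟨hi, ha⟩, ⟨_, hb⟩⟩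
          · exact ⟨hi, by rw [hab, hab', ha, hb]⟩
          · exact ⟨hi, by rw [hab, hab', ha, hb, Sym2.eq_swap]⟩
        obtain ⟨rfl, hv⟩ := this
        rw [Subtype.ext hv]
      · obtain ⟨a, b, hab⟩ := sym2_exists e.val
        simp only [hF, hab, Sym2.map_pair_eq, Sym2.eq_iff] at h
        rcases h with ⟨h1, h2⟩ | ⟨h1, h2⟩
        · exact absurd h1 (by simp)
        · exact absurd h2 (by simp)
      · obtain ⟨a, b, hab⟩ := sym2_exists e'.val
        simp only [hF, hab, Sym2.map_pair_eq, Sym2.eq_iff] at h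
        rcases h with ⟨h1, h2⟩ | ⟨h1, h2⟩ <;> exact absurd h1 (by simp)
      · simp only [hF, Sym2.eq_iff] at h
        rcases h with ⟨h1, h2⟩ | ⟨h1, h2⟩
        · simp only [Sum.inl.injEq, Sum.inr.injEq, Prod.mk.injEq] at h1 h2
          simp [h1, h2.2]
        · simp at h1
    have hsub : ↑(Finset.image F Finset.univ) ⊆ S := by
      intro e he
      simp only [Finset.coe_image, Set.mem_image, Finset.coe_univ, Set.mem_univ, true_and] at he
      obtain ⟨a, rfl⟩ := he
      rcases a with ⟨i, ev⟩ | ⟨u, c⟩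
      · obtain ⟨a, b, hab⟩ := sym2_exists ev.val
        have hne : a ≠ b := by
          have := ev.prop; rw [hab, Sym2.mk_isDiag_iff] at this; exact this
        exact Or.inl ⟨i, a, b, hne, by simp [hF, hab, Sym2.map_pair_eq]⟩
      · exact Or.inr ⟨u, c, rfl⟩
    have hcard : (Finset.image F Finset.univ).card = 3 * N.choose 2 + n ^ 4 := by
      rw [Finset.card_image_of_injective _ hFinj, Finset.card_univ]
      calc Fintype.card (((Fin 3) × {e : Sym2 (Fin N) // ¬ e.IsDiag}) ⊕ (V × Fin N))
          = 3 * N.choose 2 + n * N := by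
            rw [Fintype.card_sum, Fintype.card_prod, Fintype.card_prod,
              Sym2.card_subtype_not_diag, Fintype.card_fin]
            rw [Fintype.card_fin, ← hn]
        _ = 3 * N.choose 2 + n ^ 4 := by rw [hN]; ring
    calc 3 * N.choose 2 + n ^ 4 = (Finset.image F Finset.univ).card := hcard.symm
      _ = (↑(Finset.image F Finset.univ) : Set _).ncard := (Set.ncard_coe_finset _).symm
      _ ≤ S.ncard := Set.ncard_le_ncard hsub (Set.toFinite S)

lemma two_mul_choose_two (N : ℕ) : 2 * N.choose 2 = N * (N - 1) := by
  rw [Nat.choose_two_right, Nat.two_mul_div_two_of_even (Nat.even_mul_pred_self N)]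


open Sum Finset in
lemma tcc_backward {V : Type*} [Fintype V] (G : SimpleGraph V) (N : ℕ)
    (hNbig : Fintype.card V * (Fintype.card V + 1) < N)
    (S : Set (Sym2 (V ⊕ (Fin 3 × Fin N))))
    (hSTC : IsSTCLabeling (tccGraph G N) S)
    (hbig : 3 * N.choose 2 + Fintype.card V * N ≤ S.ncard) :
    (∃ V1 V2 V3 : Set V, V1 ∪ V2 ∪ V3 = Set.univ ∧
      Disjoint V1 V2 ∧ Disjoint V1 V3 ∧ Disjoint V2 V3 ∧
      G.IsClique V1 ∧ G.IsClique V2 ∧ G.IsClique V3) := by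
  classical
  obtain ⟨hSsub, hwedge⟩ := hSTC
  have adjS : ∀ {a b : V ⊕ (Fin 3 × Fin N)}, s(a, b) ∈ S → (tccGraph G N).Adj a b :=
    fun h => ((tccGraph G N).mem_edgeSet).mp (hSsub h)
  set T : Finset (Sym2 (V ⊕ (Fin 3 × Fin N))) := (Set.toFinite S).toFinset with hT
  have hTmem : ∀ e, e ∈ T ↔ e ∈ S := fun e => Set.Finite.mem_toFinset _
  have hTcard : T.card = S.ncard := (Set.ncard_eq_toFinset_card S (Set.toFinite S)).symm
  set T1 := T.filter (fun e => ∀ x ∈ e, x.isRight) with hT1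
  set T3 := T.filter (fun e => ∀ x ∈ e, x.isLeft) with hT3
  set T2 := T \ (T1 ∪ T3) with hT2
  have hsplit : T1.card + T3.card + T2.card = T.card := by
    have hdisj : Disjoint T1 T3 := by
      rw [Finset.disjoint_left]
      intro e he1 he3
      obtain ⟨a, b, rfl⟩ := sym2_exists e
      rw [hT1, Finset.mem_filter] at he1
      rw [hT3, Finset.mem_filter] at he3
      have h1 := he1.2 a (Sym2.mem_mk_left a b)
      have h2 := he3.2 a (Sym2.mem_mk_left a b)
      cases a
      · simp at h1
      · simp at h2
    have hsub : T1 ∪ T3 ⊆ T := by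
      rw [hT1, hT3]
      exact Finset.union_subset (Finset.filter_subset _ _) (Finset.filter_subset _ _)
    have h1 := Finset.card_sdiff_add_card_eq_card hsub
    have h2 := Finset.card_union_of_disjoint hdisj
    rw [hT2]
    omega
  -- the graph of strong K-K edges
  set H : SimpleGraph (Fin 3 × Fin N) :=
    { Adj := fun x y => s(Sum.inr x, Sum.inr y) ∈ S
      symm := ⟨by intro x y h; rwa [Sym2.eq_swap] at h⟩
      loopless := ⟨fun x h => (tccGraph G N).irrefl (adjS h)⟩ } with hH
  haveI : DecidableRel H.Adj := Classical.decRel _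
  have hHadj : ∀ x y, H.Adj x y ↔ s(Sum.inr x, Sum.inr y) ∈ S := fun x y => Iff.rfl
  have hdeg : ∀ x, H.degree x ≤ N - 1 := by
    intro x
    rw [← SimpleGraph.card_neighborFinset_eq_degree]
    have hmaps : ∀ y ∈ H.neighborFinset x, Prod.snd y ∈ (Finset.univ : Finset (Fin N)).erase x.2 := by
      intro y hy
      rw [SimpleGraph.mem_neighborFinset] at hy
      have := (tcc_adj_rr G N x y).mp (adjS hy)
      exact Finset.mem_erase.mpr ⟨fun h => this h.symm, Finset.mem_univ _⟩
    have hinj : Set.InjOn (Prod.snd : Fin 3 × Fin N → Fin N) ↑(H.neighborFinset x) := by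
      intro y hy y' hy' hsnd
      simp only [Finset.coe_sort_coe, Finset.mem_coe, SimpleGraph.mem_neighborFinset] at hy hy'
      by_contra hne
      have h1 : s(Sum.inr y, Sum.inr x) ∈ S := by rw [Sym2.eq_swap]; exact hy
      have h2 : s(Sum.inr x, Sum.inr y') ∈ S := hy'
      have hadj := hwedge _ _ _ h1 h2 (fun h => hne (Sum.inr_injective h))
      exact (tcc_adj_rr G N y y').mp hadj hsnd
    have := Finset.card_le_card_of_injOn Prod.snd hmaps hinj
    rwa [Finset.card_erase_of_mem (Finset.mem_univ _), Finset.card_univ,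
      Fintype.card_fin] at this
  have hT1card : T1.card ≤ 3 * N.choose 2 := by
    have himg : T1 = H.edgeFinset.image (Sym2.map Sum.inr) := by
      ext e
      constructor
      · intro he
        rw [hT1, Finset.mem_filter] at he
        obtain ⟨a, b, rfl⟩ := sym2_exists e
        obtain ⟨x, rfl⟩ : ∃ x, a = Sum.inr x := by
          cases a with
          | inl u => have := he.2 _ (Sym2.mem_mk_left _ b); simp at this
          | inr x => exact ⟨x, rfl⟩
        obtain ⟨y, rfl⟩ : ∃ y, b = Sum.inr y := by
          cases b with
          | inl u => have := he.2 _ (Sym2.mem_mk_right _ _); simp at this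
          | inr y => exact ⟨y, rfl⟩
        refine Finset.mem_image.mpr ⟨s(x, y), ?_, by rw [Sym2.map_pair_eq]⟩
        rw [SimpleGraph.mem_edgeFinset, SimpleGraph.mem_edgeSet]
        exact (hTmem _).mp he.1
      · intro he
        obtain ⟨e', he', rfl⟩ := Finset.mem_image.mp he
        obtain ⟨x, y, rfl⟩ := sym2_exists e'
        rw [SimpleGraph.mem_edgeFinset, SimpleGraph.mem_edgeSet] at he'
        rw [hT1, Finset.mem_filter, Sym2.map_pair_eq]
        refine ⟨(hTmem _).mpr he', ?_⟩
        intro z hz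
        rw [Sym2.mem_iff] at hz
        rcases hz with rfl | rfl <;> simp
    rw [himg, Finset.card_image_of_injective _ (Sym2.map.injective Sum.inr_injective)]
    have hhs := SimpleGraph.sum_degrees_eq_twice_card_edges H
    have hsum : ∑ v, H.degree v ≤ (3 * N) * (N - 1) := by
      calc ∑ v, H.degree v ≤ (Finset.univ : Finset (Fin 3 × Fin N)).card * (N - 1) := by
            apply Finset.sum_le_card_nsmul
            intro x _
            exact hdeg x
        _ = (3 * N) * (N - 1) := by
            rw [Finset.card_univ, Fintype.card_prod, Fintype.card_fin, Fintype.card_fin]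
    have h2C := two_mul_choose_two N
    have h3 : (3 * N) * (N - 1) = 3 * (N * (N - 1)) := by ring
    omega
  have hT3card : T3.card ≤ Fintype.card V * (Fintype.card V + 1) := by
    have hsub : T3 ⊆ Finset.univ.image (Sym2.map (Sum.inl : V → V ⊕ (Fin 3 × Fin N))) := by
      intro e he
      rw [hT3, Finset.mem_filter] at he
      obtain ⟨a, b, rfl⟩ := sym2_exists e
      obtain ⟨u, rfl⟩ : ∃ u, a = Sum.inl u := by
        cases a with
        | inl u => exact ⟨u, rfl⟩
        | inr x => have := he.2 _ (Sym2.mem_mk_left _ b); simp at this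
      obtain ⟨v, rfl⟩ : ∃ v, b = Sum.inl v := by
        cases b with
        | inl v => exact ⟨v, rfl⟩
        | inr x => have := he.2 _ (Sym2.mem_mk_right _ _); simp at this
      exact Finset.mem_image.mpr ⟨s(u, v), Finset.mem_univ _, by rw [Sym2.map_pair_eq]⟩
    calc T3.card ≤ (Finset.univ.image (Sym2.map (Sum.inl : V → V ⊕ (Fin 3 × Fin N)))).card :=
          Finset.card_le_card hsub
      _ ≤ (Finset.univ : Finset (Sym2 V)).card := Finset.card_image_le
      _ = (Fintype.card V + 1).choose 2 := by rw [Finset.card_univ, Sym2.card]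
      _ = (Fintype.card V + 1) * Fintype.card V / 2 := by rw [Nat.choose_two_right]; simp
      _ ≤ (Fintype.card V + 1) * Fintype.card V := Nat.div_le_self _ 2
      _ = Fintype.card V * (Fintype.card V + 1) := mul_comm _ _
  -- mixed edges
  set Nu : V → Finset (Fin 3 × Fin N) :=
    fun u => Finset.univ.filter (fun x => s(Sum.inl u, Sum.inr x) ∈ S) with hNu
  set Cu : V → Finset (Fin N) := fun u => (Nu u).image Prod.snd with hCu
  have hNuCu : ∀ u, (Nu u).card = (Cu u).card := by
    intro u
    rw [hCu]
    refine (Finset.card_image_of_injOn ?_).symm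
    intro x hx y hy hsnd
    simp only [hNu, Finset.coe_filter, Set.mem_setOf_eq, Finset.mem_univ, true_and] at hx hy
    by_contra hne
    have h1 : s(Sum.inr x, Sum.inl u) ∈ S := by rw [Sym2.eq_swap]; exact hx
    have := (tcc_adj_rr G N x y).mp (hwedge _ _ _ h1 hy (by simp [hne]))
    exact this hsnd
  have hT2card : T2.card = ∑ u, (Nu u).card := by
    have himg : T2 = Finset.univ.biUnion
        (fun u : V => (Nu u).image (fun x => s(Sum.inl u, Sum.inr x))) := by
      ext e
      constructor
      · intro he
        rw [hT2, Finset.mem_sdiff, Finset.mem_union] at he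
        obtain ⟨heT, hnot⟩ := he
        obtain ⟨a, b, rfl⟩ := sym2_exists e
        have hmk : ∃ u x, s(a, b) = s(Sum.inl u, Sum.inr x) := by
          cases a with
          | inl u =>
            cases b with
            | inl v =>
              exfalso; apply hnot; right
              rw [hT3, Finset.mem_filter]
              refine ⟨heT, ?_⟩
              intro z hz; rw [Sym2.mem_iff] at hz
              rcases hz with rfl | rfl <;> simp
            | inr x => exact ⟨u, x, rfl⟩
          | inr x =>
            cases b with
            | inl u => exact ⟨u, x, Sym2.eq_swap⟩
            | inr y =>
              exfalso; apply hnot; left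
              rw [hT1, Finset.mem_filter]
              refine ⟨heT, ?_⟩
              intro z hz; rw [Sym2.mem_iff] at hz
              rcases hz with rfl | rfl <;> simp
        obtain ⟨u, x, hmk⟩ := hmk
        rw [hmk] at heT ⊢
        refine Finset.mem_biUnion.mpr ⟨u, Finset.mem_univ _, Finset.mem_image.mpr ⟨x, ?_, rfl⟩⟩
        rw [hNu, Finset.mem_filter]
        exact ⟨Finset.mem_univ _, (hTmem _).mp heT⟩
      · intro he
        obtain ⟨u, -, he⟩ := Finset.mem_biUnion.mp he
        obtain ⟨x, hx, rfl⟩ := Finset.mem_image.mp he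
        rw [hNu, Finset.mem_filter] at hx
        rw [hT2, Finset.mem_sdiff, Finset.mem_union]
        refine ⟨(hTmem _).mpr hx.2, ?_⟩
        rintro (h | h)
        · rw [hT1, Finset.mem_filter] at h
          have := h.2 _ (Sym2.mem_mk_left _ _)
          simp at this
        · rw [hT3, Finset.mem_filter] at h
          have := h.2 _ (Sym2.mem_mk_right _ _)
          simp at this
    rw [himg]
    rw [Finset.card_biUnion]
    · refine Finset.sum_congr rfl fun u _ => ?_
      apply Finset.card_image_of_injOn
      intro x _ y _ hxy
      rw [Sym2.eq_iff] at hxy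
      rcases hxy with ⟨-, h⟩ | ⟨h, -⟩
      · exact Sum.inr_injective h
      · simp at h
    · intro u _ u' _ hne
      rw [Function.onFun, Finset.disjoint_left]
      intro e he he'
      obtain ⟨x, -, rfl⟩ := Finset.mem_image.mp he
      obtain ⟨x', -, hx'⟩ := Finset.mem_image.mp he'
      rw [Sym2.eq_iff] at hx'
      rcases hx' with ⟨h, -⟩ | ⟨h, -⟩
      · exact hne (Sum.inl_injective h.symm)
      · simp at h
  -- the counting
  have hCuN : ∀ u, (Cu u).card ≤ N := fun u => by
    calc (Cu u).card ≤ (Finset.univ : Finset (Fin N)).card :=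
          Finset.card_le_card (Finset.subset_univ _)
      _ = N := by rw [Finset.card_univ, Fintype.card_fin]
  have hsum1 : ∑ u : V, (N - (Cu u).card) + ∑ u : V, (Cu u).card = Fintype.card V * N := by
    rw [← Finset.sum_add_distrib]
    have : ∀ u : V, (N - (Cu u).card) + (Cu u).card = N := fun u => Nat.sub_add_cancel (hCuN u)
    rw [Finset.sum_congr rfl (fun u _ => this u), Finset.sum_const, Finset.card_univ,
      smul_eq_mul]
  have hsumCu : T2.card = ∑ u : V, (Cu u).card := by
    rw [hT2card]; exact Finset.sum_congr rfl fun u _ => hNuCu u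
  set Bad := Finset.univ.filter (fun c : Fin N => ∃ u : V, c ∉ Cu u) with hBad
  have hBadcard : Bad.card ≤ ∑ u : V, (N - (Cu u).card) := by
    have hsub : Bad ⊆ Finset.univ.biUnion (fun u : V => Finset.univ \ Cu u) := by
      intro c hc
      rw [hBad, Finset.mem_filter] at hc
      obtain ⟨-, u, hu⟩ := hc
      exact Finset.mem_biUnion.mpr ⟨u, Finset.mem_univ _,
        Finset.mem_sdiff.mpr ⟨Finset.mem_univ _, hu⟩⟩
    calc Bad.card ≤ (Finset.univ.biUnion (fun u : V => Finset.univ \ Cu u)).card :=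
          Finset.card_le_card hsub
      _ ≤ ∑ u : V, (Finset.univ \ Cu u).card := Finset.card_biUnion_le
      _ = ∑ u : V, (N - (Cu u).card) := by
          refine Finset.sum_congr rfl fun u _ => ?_
          rw [Finset.card_sdiff_of_subset (Finset.subset_univ _), Finset.card_univ, Fintype.card_fin]
  have hBadlt : Bad.card < N := by
    have h1 : 3 * N.choose 2 + Fintype.card V * N ≤ T.card := hTcard ▸ hbig
    omega
  have hex : ∃ c : Fin N, ∀ u : V, c ∈ Cu u := by
    have hne : (Finset.univ \ Bad).Nonempty := by
      rw [← Finset.card_pos, Finset.card_sdiff_of_subset (Finset.subset_univ _), Finset.card_univ,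
        Fintype.card_fin]
      omega
    obtain ⟨c, hc⟩ := hne
    rw [Finset.mem_sdiff, hBad, Finset.mem_filter] at hc
    refine ⟨c, fun u => ?_⟩
    by_contra hcu
    exact hc.2 ⟨Finset.mem_univ _, u, hcu⟩
  obtain ⟨c₀, hc₀⟩ := hex
  have hchoice : ∀ u : V, ∃ i : Fin 3, s(Sum.inl u, Sum.inr (i, c₀)) ∈ S := by
    intro u
    obtain ⟨x, hx, hx2⟩ := Finset.mem_image.mp (hc₀ u)
    rw [hNu, Finset.mem_filter] at hx
    refine ⟨x.1, ?_⟩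
    have : (x.1, c₀) = x := by rw [← hx2]
    rw [this]
    exact hx.2
  set g : V → Fin 3 := fun u => Classical.choose (hchoice u) with hg
  have hgS : ∀ u, s(Sum.inl u, Sum.inr (g u, c₀)) ∈ S := fun u => Classical.choose_spec (hchoice u)
  have hclq : ∀ i : Fin 3, G.IsClique {u | g u = i} := by
    intro i
    rw [SimpleGraph.isClique_iff]
    intro u hu u' hu' hne
    have h1 : s(Sum.inl u, Sum.inr (i, c₀)) ∈ S := by
      have := hgS u; rwa [Set.mem_setOf_eq.mp hu] at this
    have h2 : s(Sum.inr (i, c₀), Sum.inl u') ∈ S := by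
      rw [Sym2.eq_swap]
      have := hgS u'; rwa [Set.mem_setOf_eq.mp hu'] at this
    have hadj := hwedge _ _ _ h1 h2 (fun h => hne (Sum.inl_injective h))
    exact (tcc_adj_ll G N u u').mp hadj
  refine ⟨{u | g u = 0}, {u | g u = 1}, {u | g u = 2}, ?_, ?_, ?_, ?_, hclq 0, hclq 1, hclq 2⟩
  · ext u
    simp only [Set.mem_union, Set.mem_setOf_eq, Set.mem_univ, iff_true]
    have : ∀ i : Fin 3, i = 0 ∨ i = 1 ∨ i = 2 := by decide
    rcases this (g u) with h | h | h <;> tauto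
  · rw [Set.disjoint_left]; intro u h0 h1
    rw [Set.mem_setOf_eq] at h0 h1; rw [h0] at h1; exact absurd h1 (by decide)
  · rw [Set.disjoint_left]; intro u h0 h1
    rw [Set.mem_setOf_eq] at h0 h1; rw [h0] at h1; exact absurd h1 (by decide)
  · rw [Set.disjoint_left]; intro u h0 h1
    rw [Set.mem_setOf_eq] at h0 h1; rw [h0] at h1; exact absurd h1 (by decide)


/-- The vertex set of `G` can be partitioned into at most three cliques iff the
graph `G'` of the reduction (with `N = n³`, `n = |V|`) admits an STC-labeling with
at least `3·C(n³,2) + n⁴` strong edges. -/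
theorem three_clique_cover_iff_stc {V : Type*} [Fintype V] (G : SimpleGraph V) :
    (∃ V1 V2 V3 : Set V, V1 ∪ V2 ∪ V3 = Set.univ ∧
      Disjoint V1 V2 ∧ Disjoint V1 V3 ∧ Disjoint V2 V3 ∧
      G.IsClique V1 ∧ G.IsClique V2 ∧ G.IsClique V3) ↔
    (∃ S : Set (Sym2 (V ⊕ (Fin 3 × Fin ((Fintype.card V) ^ 3)))),
      IsSTCLabeling (tccGraph G ((Fintype.card V) ^ 3)) S ∧
      3 * ((Fintype.card V) ^ 3).choose 2 + (Fintype.card V) ^ 4 ≤ S.ncard) := by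
  constructor
  · rintro ⟨V1, V2, V3, hU, -, -, -, hC1, hC2, hC3⟩
    exact tcc_forward G V1 V2 V3 hU hC1 hC2 hC3
  · rintro ⟨S, hSTC, hcard⟩
    by_cases hn : Fintype.card V ≤ 1
    · refine ⟨Set.univ, ∅, ∅, by simp, by simp, by simp, by simp, ?_, by simp, by simp⟩
      intro u _ v _ hne
      exact absurd (Fintype.card_le_one_iff.mp hn u v) hne
    · push_neg at hn
      have hn2 : 2 ≤ Fintype.card V := hn
      have hNbig : Fintype.card V * (Fintype.card V + 1) < (Fintype.card V) ^ 3 := by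
        have h1 : Fintype.card V + 1 < Fintype.card V * Fintype.card V := by nlinarith
        calc Fintype.card V * (Fintype.card V + 1)
            < Fintype.card V * (Fintype.card V * Fintype.card V) :=
              Nat.mul_lt_mul_of_le_of_lt (le_refl _) h1 (by omega)
          _ = (Fintype.card V) ^ 3 := by ring
      have hpow : (Fintype.card V) ^ 4 = Fintype.card V * (Fintype.card V) ^ 3 := by ring
      exact tcc_backward G ((Fintype.card V) ^ 3) hNbig S hSTC (by omega)
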